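/- For arbitrary scalars p, q, r, the skew-symmetric bilinear map φ_7(p,q,r) on h_2 defined by φ_7(e_1,e_3) = p e_1, φ_7(e_2,e_3) = e_1 + q e_2, φ_7(e_3,e_4) = −e_2 − r e_4, φ_7(e_3,e_5) = −(q+r)e_5, and zero otherwise, is a 2-cocycle of h_2 with adjoint coefficients, and the bracket [x,y]_t = [x,y] + t φ_7(p,q,r)(x,y) satisfies the Jacobi identity for every t. -/
import Mathlib


noncomputable section

/-- The underlying space of the 5-dimensional Heisenberg Lie algebra `h₂`. -/
abbrev V : Type := Fin 5 → ℝ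

/-- Basis vectors: `e 0, …, e 4` are `e₁, …, e₅`. -/
def e (i : Fin 5) : V := Pi.single i 1

/-- The Heisenberg bracket on `h₂`: `[e₁,e₃] = e₅`, `[e₂,e₄] = e₅`. -/
def br (x y : V) : V :=
  (x 0 * y 2 - x 2 * y 0 + x 1 * y 3 - x 3 * y 1) • e 4

/-- The deformed bracket `[x,y]_t = [x,y] + t • φ x y`. -/
def brt (t : ℝ) (φ : V → V → V) (x y : V) : V := br x y + t • φ x y

/-- The Chevalley–Eilenberg 2-cocycle condition (adjoint coefficients) for a
skew-symmetric 2-cochain `φ` on `h₂`. -/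
def IsCocycle (φ : V → V → V) : Prop :=
  ∀ x y z : V,
    φ (br x y) z - φ (br x z) y + φ (br y z) x
      - br x (φ y z) + br y (φ x z) - br z (φ x y) = 0

/-- `φ₇(p,q,r)`: `(e₁,e₃) ↦ p e₁`, `(e₂,e₃) ↦ e₁ + q e₂`, `(e₃,e₄) ↦ −e₂ − r e₄`, `(e₃,e₅) ↦ −(q+r)e₅`, zero otherwise. -/
def phi7 (p q r : ℝ) (x y : V) : V :=
  (x 0 * y 2 - x 2 * y 0) • (p • e 0)
  + (x 1 * y 2 - x 2 * y 1) • (e 0 + q • e 1)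
  + (x 2 * y 3 - x 3 * y 2) • (-e 1 - r • e 3)
  + (x 2 * y 4 - x 4 * y 2) • ((-(q + r)) • e 4)

set_option maxHeartbeats 1000000 in
lemma e_apply (i j : Fin 5) : e i j = if j = i then 1 else 0 := Pi.single_apply i 1 j

lemma br_apply (x y : V) (i : Fin 5) :
    br x y i = (x 0 * y 2 - x 2 * y 0 + x 1 * y 3 - x 3 * y 1) * e 4 i := rfl

lemma brt_apply (t : ℝ) (φ : V → V → V) (x y : V) (i : Fin 5) :
    brt t φ x y i = br x y i + t * φ x y i := rfl

lemma phi7_apply (p q r : ℝ) (x y : V) (i : Fin 5) :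
    phi7 p q r x y i =
      (x 0 * y 2 - x 2 * y 0) * (p * e 0 i)
      + (x 1 * y 2 - x 2 * y 1) * (e 0 i + q * e 1 i)
      + (x 2 * y 3 - x 3 * y 2) * (-(e 1 i) - r * e 3 i)
      + (x 2 * y 4 - x 4 * y 2) * (-(q + r) * e 4 i) := rfl

set_option maxHeartbeats 2000000 in
/-- For arbitrary scalars `p, q, r`, `φ₇(p,q,r)` is a 2-cocycle of `h₂`, and
`[x,y]_t = [x,y] + t φ₇(p,q,r)(x,y)` satisfies the Jacobi identity for every
`t`. -/
theorem phi7_cocycle_and_jacobi (p q r : ℝ) :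
    IsCocycle (phi7 p q r) ∧
      ∀ (t : ℝ) (x y z : V),
        brt t (phi7 p q r) x (brt t (phi7 p q r) y z)
          + brt t (phi7 p q r) y (brt t (phi7 p q r) z x)
          + brt t (phi7 p q r) z (brt t (phi7 p q r) x y) = 0 := by
  constructor
  · intro x y z
    funext i
    fin_cases i <;>
      simp [phi7, br, e, Pi.single_apply] <;> ring
  · intro t x y z
    funext i
    fin_cases i <;>
    · simp only [Pi.add_apply, Pi.zero_apply, brt_apply, br_apply, phi7_apply, e_apply,
        Fin.reduceEq, reduceIte, if_true, mul_zero, zero_mul, mul_one, one_mul,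
        add_zero, zero_add, neg_zero, sub_zero, zero_sub, mul_neg, neg_mul]
      ring

end
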